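/- Let μ be a topological measure on a locally compact, Hausdorff, connected space X. Then μ is superadditive: if (A_t)_{t∈T} is a family of pairwise disjoint subsets of X, each of which is open or closed, at most one of the closed sets among them is not compact, and ⊔_{t∈T} A_t ⊆ A where A is open or closed, then μ(A) ≥ Σ_{t∈T} μ(A_t). -/

import Mathlib

open Set Filter Topology MeasureTheory
open scoped ENNReal BoundedContinuousFunction

universe u

/-- A topological measure on `X`: a set function on subsets of `X` (only its values on open
and closed sets matter), not identically `∞` on open/closed sets, satisfying (TM1)–(TM3). -/
structure TopMeasure (X : Type u) [TopologicalSpace X] where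
  toFun : Set X → ℝ≥0∞
  not_all_top : ∃ A : Set X, (IsOpen A ∨ IsClosed A) ∧ toFun A ≠ ∞
  tm1 : ∀ A B : Set X, Disjoint A B → (IsOpen A ∨ IsCompact A) → (IsOpen B ∨ IsCompact B) →
      (IsOpen (A ∪ B) ∨ IsCompact (A ∪ B)) → toFun (A ∪ B) = toFun A + toFun B
  tm2 : ∀ U : Set X, IsOpen U → toFun U = ⨆ K ∈ {K : Set X | IsCompact K ∧ K ⊆ U}, toFun K
  tm3 : ∀ F : Set X, IsClosed F → toFun F = ⨅ U ∈ {U : Set X | IsOpen U ∧ F ⊆ U}, toFun U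

/-- `μ` is compact-finite. -/
def TopMeasure.CompactFinite {X : Type u} [TopologicalSpace X] (μ : TopMeasure X) : Prop :=
  ∀ K : Set X, IsCompact K → μ.toFun K ≠ ∞

/-- The set of compactly supported continuous functions, inside `C_b(X)`. -/
def CcS (X : Type u) [TopologicalSpace X] : Set (X →ᵇ ℝ) :=
  {f | HasCompactSupport (f : X → ℝ)}

/-- The set of continuous functions vanishing at infinity, inside `C_b(X)`. -/
def C0S (X : Type u) [TopologicalSpace X] : Set (X →ᵇ ℝ) :=
  {f | Tendsto (f : X → ℝ) (cocompact X) (nhds 0)}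

/-- `𝔅` is a (non-unital) subalgebra of `C_b(X)`. -/
def IsSubalgS {X : Type u} [TopologicalSpace X] (𝔅 : Set (X →ᵇ ℝ)) : Prop :=
  (∀ f g : X →ᵇ ℝ, f ∈ 𝔅 → g ∈ 𝔅 → f + g ∈ 𝔅) ∧
  (∀ f g : X →ᵇ ℝ, f ∈ 𝔅 → g ∈ 𝔅 → f * g ∈ 𝔅) ∧
  (∀ (c : ℝ) (f : X →ᵇ ℝ), f ∈ 𝔅 → c • f ∈ 𝔅)

/-- The singly generated subalgebra `B(h)`: the smallest closed (in `𝔅`) subalgebra of `𝔅`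
containing `h`. -/
def sgen {X : Type u} [TopologicalSpace X] (𝔅 : Set (X →ᵇ ℝ)) (h : X →ᵇ ℝ) :
    Set (X →ᵇ ℝ) :=
  ⋂₀ {S : Set (X →ᵇ ℝ) | S ⊆ 𝔅 ∧ h ∈ S ∧
      (∀ f g : X →ᵇ ℝ, f ∈ S → g ∈ S → f + g ∈ S) ∧
      (∀ f g : X →ᵇ ℝ, f ∈ S → g ∈ S → f * g ∈ S) ∧
      (∀ (c : ℝ) (f : X →ᵇ ℝ), f ∈ S → c • f ∈ S) ∧
      IsClosed {x : ↥𝔅 | (x : X →ᵇ ℝ) ∈ S}}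

/-- A signed quasi-linear functional on `𝔅` (QI1), (QI2). -/
structure SignedQLF {X : Type u} [TopologicalSpace X] (𝔅 : Set (X →ᵇ ℝ)) where
  toFun : (X →ᵇ ℝ) → ℝ
  smul_eq : ∀ (a : ℝ) (f : X →ᵇ ℝ), f ∈ 𝔅 → toFun (a • f) = a * toFun f
  add_eq : ∀ h ∈ 𝔅, ∀ f g : X →ᵇ ℝ, f ∈ sgen 𝔅 h → g ∈ sgen 𝔅 h →
      toFun (f + g) = toFun f + toFun g

/-- A (positive) quasi-linear functional on `𝔅` (QI1)–(QI3). -/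
structure QLF {X : Type u} [TopologicalSpace X] (𝔅 : Set (X →ᵇ ℝ)) extends SignedQLF 𝔅 where
  pos : ∀ f : X →ᵇ ℝ, f ∈ 𝔅 → 0 ≤ f → 0 ≤ toFun f

/-- `‖ρ‖ = sup {ρ(f) : f ∈ 𝔅, 0 ≤ f ≤ 1}`, as an extended real number. -/
noncomputable def qnorm {X : Type u} [TopologicalSpace X] {𝔅 : Set (X →ᵇ ℝ)} (ρ : QLF 𝔅) :
    ℝ≥0∞ :=
  ⨆ f ∈ {f : X →ᵇ ℝ | f ∈ 𝔅 ∧ 0 ≤ f ∧ f ≤ 1}, ENNReal.ofReal (ρ.toFun f)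

/-- `m` is the measure `m_f` on `ℝ` associated with a finite topological measure `μ` and
`f ∈ C₀(X)` (case (A)): `m(W) = μ(f⁻¹(W))` for every open `W ⊆ ℝ`. -/
def IsMfA {X : Type u} [TopologicalSpace X] (μ : TopMeasure X) (f : X →ᵇ ℝ)
    (m : Measure ℝ) : Prop :=
  ∀ W : Set ℝ, IsOpen W → m W = μ.toFun ((f : X → ℝ) ⁻¹' W)

/-- `m` is the measure `m_f` on `ℝ` associated with a compact-finite topological measure `μ`
and `f ∈ C_c(X)` (case (B)): `m(W) = μ(f⁻¹(W \ {0}))` for every open `W ⊆ ℝ`. -/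
def IsMfB {X : Type u} [TopologicalSpace X] (μ : TopMeasure X) (f : X →ᵇ ℝ)
    (m : Measure ℝ) : Prop :=
  ∀ W : Set ℝ, IsOpen W → m W = μ.toFun ((f : X → ℝ) ⁻¹' (W \ {0}))

/-- The support of a (Borel) measure on `ℝ`. -/
def msupp (m : Measure ℝ) : Set ℝ := {x : ℝ | ∀ U ∈ nhds x, 0 < m U}

/-- The set function `μ_ρ` on open sets:
`μ_ρ(U) = sup {ρ(f) : f ∈ C_c(X), 0 ≤ f ≤ 1, supp f ⊆ U}`. -/
noncomputable def muO {X : Type u} [TopologicalSpace X] {𝔅 : Set (X →ᵇ ℝ)} (ρ : QLF 𝔅)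
    (U : Set X) : ℝ≥0∞ :=
  ⨆ f ∈ {f : X →ᵇ ℝ | f ∈ CcS X ∧ 0 ≤ f ∧ f ≤ 1 ∧ tsupport (f : X → ℝ) ⊆ U},
    ENNReal.ofReal (ρ.toFun f)

/-- The set function `μ_ρ` on closed sets: `μ_ρ(F) = inf {μ_ρ(U) : U open, F ⊆ U}`. -/
noncomputable def muC {X : Type u} [TopologicalSpace X] {𝔅 : Set (X →ᵇ ℝ)} (ρ : QLF 𝔅)
    (F : Set X) : ℝ≥0∞ :=
  ⨅ U ∈ {U : Set X | IsOpen U ∧ F ⊆ U}, muO ρ U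

open Classical in
/-- The set function `μ_ρ`. -/
noncomputable def muR {X : Type u} [TopologicalSpace X] {𝔅 : Set (X →ᵇ ℝ)} (ρ : QLF 𝔅) :
    Set X → ℝ≥0∞ :=
  fun A => if IsOpen A then muO ρ A else muC ρ A

/-- `ρ = ρ_μ` on `C₀(X)` (case (A)): for every `f ∈ C₀(X)` and every measure `m_f`
associated with `μ` and `f`, `ρ(f) = ∫_ℝ id dm_f`. -/
def ReprA {X : Type u} [TopologicalSpace X] {𝔅 : Set (X →ᵇ ℝ)} (μ : TopMeasure X)
    (ρ : QLF 𝔅) : Prop :=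
  ∀ f ∈ C0S X, ∀ m : Measure ℝ, IsMfA μ f m → ρ.toFun f = ∫ t, t ∂m

/-- `ρ = ρ_μ` on `C_c(X)` (case (B)). -/
def ReprB {X : Type u} [TopologicalSpace X] {𝔅 : Set (X →ᵇ ℝ)} (μ : TopMeasure X)
    (ρ : QLF 𝔅) : Prop :=
  ∀ f ∈ CcS X, ∀ m : Measure ℝ, IsMfB μ f m → ρ.toFun f = ∫ t, t ∂m

section Aux

variable {X : Type u} [TopologicalSpace X] [T2Space X]

lemma TopMeasure.compact_le_open (μ : TopMeasure X) {K U : Set X} (hK : IsCompact K)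
    (hU : IsOpen U) (h : K ⊆ U) : μ.toFun K ≤ μ.toFun U := by
  have hd : Disjoint K (U \ K) := disjoint_sdiff_right
  have h1 : μ.toFun (K ∪ U \ K) = μ.toFun K + μ.toFun (U \ K) :=
    μ.tm1 K (U \ K) hd (Or.inr hK) (Or.inl (hU.sdiff hK.isClosed))
      (by rw [Set.union_diff_cancel h]; exact Or.inl hU)
  rw [Set.union_diff_cancel h] at h1
  rw [h1]; exact le_self_add

lemma TopMeasure.mono_open (μ : TopMeasure X) {A U : Set X} (hA : IsOpen A ∨ IsClosed A)
    (hU : IsOpen U) (h : A ⊆ U) : μ.toFun A ≤ μ.toFun U := by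
  rcases hA with hA | hA
  · rw [μ.tm2 A hA]
    exact iSup₂_le fun K hK => μ.compact_le_open hK.1 hU (hK.2.trans h)
  · rw [μ.tm3 A hA]
    exact iInf₂_le U ⟨hU, h⟩

lemma TopMeasure.mono (μ : TopMeasure X) {A B : Set X} (hA : IsOpen A ∨ IsClosed A)
    (hB : IsOpen B ∨ IsClosed B) (h : A ⊆ B) : μ.toFun A ≤ μ.toFun B := by
  rcases hB with hB | hB
  · exact μ.mono_open hA hB h
  · rw [μ.tm3 B hB]
    exact le_iInf₂ fun U hU => μ.mono_open hA hU.1 (h.trans hU.2)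

lemma TopMeasure.empty_eq_zero (μ : TopMeasure X) : μ.toFun (∅ : Set X) = 0 := by
  obtain ⟨A, hA, hfin⟩ := μ.not_all_top
  have hle : μ.toFun (∅ : Set X) ≤ μ.toFun A :=
    μ.mono (Or.inl isOpen_empty) hA (Set.empty_subset A)
  have hne : μ.toFun (∅ : Set X) ≠ ∞ := fun hh => hfin (top_le_iff.1 (hh ▸ hle))
  have h1 : μ.toFun ((∅ : Set X) ∪ ∅) = μ.toFun (∅ : Set X) + μ.toFun (∅ : Set X) :=
    μ.tm1 ∅ ∅ disjoint_bot_left (Or.inl isOpen_empty) (Or.inl isOpen_empty)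
      (by rw [Set.union_empty]; exact Or.inl isOpen_empty)
  rw [Set.union_empty] at h1
  have h2 : μ.toFun (∅ : Set X) + 0 = μ.toFun (∅ : Set X) + μ.toFun (∅ : Set X) := by
    rw [add_zero]; exact h1
  exact ((ENNReal.add_right_inj hne).1 h2).symm

lemma TopMeasure.core_open (μ : TopMeasure X) {K F B : Set X} (hK : IsCompact K)
    (hF : IsClosed F) (hd : Disjoint K F) (hB : IsOpen B) (h : K ∪ F ⊆ B) :
    μ.toFun K + μ.toFun F ≤ μ.toFun B := by
  have hKB : K ⊆ B := (Set.subset_union_left).trans h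
  have hFB : F ⊆ B := (Set.subset_union_right).trans h
  have h1 : μ.toFun (K ∪ B \ K) = μ.toFun K + μ.toFun (B \ K) :=
    μ.tm1 K (B \ K) disjoint_sdiff_right (Or.inr hK) (Or.inl (hB.sdiff hK.isClosed))
      (by rw [Set.union_diff_cancel hKB]; exact Or.inl hB)
  rw [Set.union_diff_cancel hKB] at h1
  have h2 : F ⊆ B \ K := Set.subset_diff.2 ⟨hFB, hd.symm⟩
  have h3 : μ.toFun F ≤ μ.toFun (B \ K) :=
    μ.mono_open (Or.inr hF) (hB.sdiff hK.isClosed) h2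
  calc μ.toFun K + μ.toFun F ≤ μ.toFun K + μ.toFun (B \ K) := by gcongr
    _ = μ.toFun B := h1.symm

lemma TopMeasure.core (μ : TopMeasure X) {K F B : Set X} (hK : IsCompact K)
    (hF : IsClosed F) (hd : Disjoint K F) (hB : IsOpen B ∨ IsClosed B) (h : K ∪ F ⊆ B) :
    μ.toFun K + μ.toFun F ≤ μ.toFun B := by
  rcases hB with hB | hB
  · exact μ.core_open hK hF hd hB h
  · rw [μ.tm3 B hB]
    exact le_iInf₂ fun U hU => μ.core_open hK hF hd hU.1 (h.trans hU.2)

lemma TopMeasure.finQ (μ : TopMeasure X) {T : Type u} (A : T → Set X) (B : Set X)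
    (hB : IsOpen B ∨ IsClosed B) (s : Finset T) :
    ∀ K F : Set X, IsCompact K → IsClosed F →
      (∀ t ∈ s, IsOpen (A t) ∨ IsCompact (A t)) →
      (∀ t ∈ s, ∀ t' ∈ s, t ≠ t' → Disjoint (A t) (A t')) →
      (∀ t ∈ s, Disjoint K (A t)) → (∀ t ∈ s, Disjoint F (A t)) → Disjoint K F →
      K ⊆ B → F ⊆ B → (∀ t ∈ s, A t ⊆ B) →
      μ.toFun K + μ.toFun F + ∑ t ∈ s, μ.toFun (A t) ≤ μ.toFun B := by
  classical
  induction s using Finset.induction with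
  | empty =>
    intro K F hK hF _ _ _ _ hKF hKB hFB _
    simpa using μ.core hK hF hKF hB (Set.union_subset hKB hFB)
  | @insert a s ha ih =>
    intro K F hK hF hoc hpd hKA hFA hKF hKB hFB hAB
    rw [Finset.sum_insert ha]
    have haB : A a ⊆ B := hAB a (Finset.mem_insert_self a s)
    have hane : ∀ t ∈ s, a ≠ t := fun t ht he => ha (he ▸ ht)
    -- helper to apply ih with K' = K ∪ Kc for a compact Kc ⊆ A a
    have key : ∀ Kc : Set X, IsCompact Kc → Kc ⊆ A a →
        μ.toFun K + μ.toFun F + (μ.toFun Kc + ∑ t ∈ s, μ.toFun (A t)) ≤ μ.toFun B := by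
      intro Kc hKc hKcA
      have hdKKc : Disjoint K Kc := (hKA a (Finset.mem_insert_self a s)).mono_right hKcA
      have h1 : μ.toFun (K ∪ Kc) = μ.toFun K + μ.toFun Kc :=
        μ.tm1 K Kc hdKKc (Or.inr hK) (Or.inr hKc) (Or.inr (hK.union hKc))
      have h2 := ih (K ∪ Kc) F (hK.union hKc) hF
        (fun t ht => hoc t (Finset.mem_insert_of_mem ht))
        (fun t ht t' ht' hne => hpd t (Finset.mem_insert_of_mem ht) t'
          (Finset.mem_insert_of_mem ht') hne)
        (fun t ht => Set.disjoint_union_left.2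
          ⟨hKA t (Finset.mem_insert_of_mem ht),
           ((hpd a (Finset.mem_insert_self a s) t (Finset.mem_insert_of_mem ht)
             (hane t ht)).mono_left hKcA)⟩)
        (fun t ht => hFA t (Finset.mem_insert_of_mem ht))
        (Set.disjoint_union_left.2
          ⟨hKF, ((hFA a (Finset.mem_insert_self a s)).symm.mono_left hKcA)⟩)
        (Set.union_subset hKB (hKcA.trans haB)) hFB
        (fun t ht => hAB t (Finset.mem_insert_of_mem ht))
      rw [h1] at h2
      calc μ.toFun K + μ.toFun F + (μ.toFun Kc + ∑ t ∈ s, μ.toFun (A t))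
          = μ.toFun K + μ.toFun Kc + μ.toFun F + ∑ t ∈ s, μ.toFun (A t) := by ring
        _ ≤ μ.toFun B := h2
    rcases hoc a (Finset.mem_insert_self a s) with hopen | hcomp
    · -- open case: use inner regularity
      have hrw : μ.toFun (A a) = ⨆ Kc : {K : Set X // IsCompact K ∧ K ⊆ A a}, μ.toFun Kc := by
        rw [μ.tm2 (A a) hopen, iSup_subtype]; rfl
      haveI : Nonempty {K : Set X // IsCompact K ∧ K ⊆ A a} :=
        ⟨⟨∅, isCompact_empty, Set.empty_subset _⟩⟩
      rw [hrw, ENNReal.iSup_add, ENNReal.add_iSup]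
      exact iSup_le fun Kc => key Kc.1 Kc.2.1 Kc.2.2
    · -- compact case
      exact key (A a) hcomp subset_rfl

end Aux

/-- a topological measure is superadditive: if pairwise disjoint sets `A t`
(each open or closed, with at most one non-compact closed set among them) satisfy
`⋃ t, A t ⊆ B` with `B` open or closed, then `∑' t, μ (A t) ≤ μ B`. -/
theorem topMeasure_superadditive {X : Type u} [TopologicalSpace X]
    [LocallyCompactSpace X] [T2Space X] [ConnectedSpace X] (μ : TopMeasure X)
    {T : Type u} (A : T → Set X) (B : Set X)
    (hdisj : Pairwise (Function.onFun Disjoint A))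
    (hoc : ∀ t, IsOpen (A t) ∨ IsClosed (A t))
    (hone : ∀ s t : T, IsClosed (A s) → ¬IsCompact (A s) →
      IsClosed (A t) → ¬IsCompact (A t) → s = t)
    (hB : IsOpen B ∨ IsClosed B) (hsub : (⋃ t, A t) ⊆ B) :
    ∑' t, μ.toFun (A t) ≤ μ.toFun B := by
  classical
  rw [ENNReal.tsum_eq_iSup_sum]
  refine iSup_le fun s => ?_
  have hAB : ∀ t, A t ⊆ B := fun t => (Set.subset_iUnion A t).trans hsub
  by_cases hex : ∃ t ∈ s, ¬(IsOpen (A t) ∨ IsCompact (A t))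
  · obtain ⟨t₀, ht₀s, ht₀⟩ := hex
    have hcl : IsClosed (A t₀) := (hoc t₀).resolve_left fun h => ht₀ (Or.inl h)
    have hnc : ¬IsCompact (A t₀) := fun h => ht₀ (Or.inr h)
    have hQ := μ.finQ A B hB (s.erase t₀) ∅ (A t₀) isCompact_empty hcl
      (fun t ht => by
        by_contra hbad
        have htcl : IsClosed (A t) := (hoc t).resolve_left fun h => hbad (Or.inl h)
        have htnc : ¬IsCompact (A t) := fun h => hbad (Or.inr h)
        exact (Finset.ne_of_mem_erase ht) (hone t t₀ htcl htnc hcl hnc))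
      (fun t _ t' _ hne => hdisj hne)
      (fun t _ => disjoint_bot_left)
      (fun t ht => hdisj (Finset.ne_of_mem_erase ht).symm)
      disjoint_bot_left (Set.empty_subset B) (hAB t₀) (fun t _ => hAB t)
    rw [μ.empty_eq_zero, zero_add] at hQ
    rw [← Finset.add_sum_erase s _ ht₀s]
    exact hQ
  · push_neg at hex
    have hQ := μ.finQ A B hB s ∅ ∅ isCompact_empty isClosed_empty hex
      (fun t _ t' _ hne => hdisj hne)
      (fun t _ => disjoint_bot_left)
      (fun t _ => disjoint_bot_left)
      disjoint_bot_left (Set.empty_subset B) (Set.empty_subset B) (fun t _ => hAB t)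
    rwa [μ.empty_eq_zero, zero_add, zero_add] at hQ
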